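/- Let ω be a principal connection one-form on a principal G-bundle π : Q → Q/G (right action), μ ∈ 𝔤*, and ω^μ = ⟨μ, ω⟩ the real-valued one-form obtained by pairing with μ. Then for every ξ in the isotropy algebra 𝔤_μ, the contraction i_{ξ_Q} dω^μ = 0; consequently dω^μ is horizontal with respect to the fibration Q → Q/G_μ and, being G_μ-invariant, descends to a 2-form β^μ on Q/G_μ. -/

import Mathlib

/-- For a principal connection ω on Q → Q/G (right action) and
μ ∈ 𝔤*, the one-form ω^μ = ⟨μ, ω⟩ satisfies i_{ξ_Q} dω^μ = 0 for every ξ in the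
isotropy algebra 𝔤_μ = {ξ : ad*_ξ μ = 0}; hence dω^μ is horizontal w.r.t.
Q → Q/G_μ (and, being G_μ-invariant, descends to a 2-form β^μ on Q/G_μ).

Model: Q is a chart modelled on the normed space E; ω q : E →ₗ 𝔤 is the
connection form at q, with ω(ξ_Q) = ξ (`hconn`); σ ξ = ξ_Q is the fundamental
vector field; infinitesimal equivariance L_{ξ_Q}ω = −ad_ξ ω, paired with μ,
is hypothesis `hequiv` (using (L_X α)_q(v) = D(α(·)v)_q(X q) + α_q(DX_q v) for
constant v).  The exterior derivative is
dω^μ_q(u, v) = D(ω^μ(·)v)_q(u) − D(ω^μ(·)u)_q(v), and the conclusion is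
dω^μ_q(ξ_Q(q), v) = 0 for all q, v whenever μ⁅ξ, η⁆ = 0 for all η. -/
theorem stmt8 {E 𝔤 : Type*} [NormedAddCommGroup E] [NormedSpace ℝ E]
    [LieRing 𝔤] [LieAlgebra ℝ 𝔤]
    (μ : Module.Dual ℝ 𝔤)
    (ω : E → E →ₗ[ℝ] 𝔤) (σ : 𝔤 → E → E)
    (hconn : ∀ (q : E) (ξ : 𝔤), ω q (σ ξ q) = ξ)
    (hσ : ∀ ξ : 𝔤, Differentiable ℝ (σ ξ))
    (hω : Differentiable ℝ fun p : E × E => μ (ω p.1 p.2))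
    (hequiv : ∀ (ξ : 𝔤) (q v : E),
      fderiv ℝ (fun p => μ (ω p v)) q (σ ξ q) + μ (ω q (fderiv ℝ (σ ξ) q v))
        = -μ ⁅ξ, ω q v⁆) :
    ∀ ξ : 𝔤, (∀ η : 𝔤, μ ⁅ξ, η⁆ = 0) →
      ∀ q v : E,
        fderiv ℝ (fun p => μ (ω p v)) q (σ ξ q)
          - fderiv ℝ (fun p => μ (ω p (σ ξ q))) q v = 0 := by
  intro ξ hμ q v
  set w := σ ξ q with hw
  set f : E × E → ℝ := fun p => μ (ω p.1 p.2) with hf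
  set F := fderiv ℝ f (q, w) with hF
  have hfd : HasFDerivAt f F (q, w) := (hω (q, w)).hasFDerivAt
  have hσd : HasFDerivAt (σ ξ) (fderiv ℝ (σ ξ) q) q := (hσ ξ q).hasFDerivAt
  set D := fderiv ℝ (σ ξ) q v with hD
  -- the composite p ↦ f (p, σ ξ p) is constant (equal to μ ξ), so F (v, D) = 0
  have hzero : F (v, D) = 0 := by
    have hcomp : HasFDerivAt (fun p => f (p, σ ξ p))
        (F.comp ((ContinuousLinearMap.id ℝ E).prod (fderiv ℝ (σ ξ) q))) q :=
      hfd.comp q (f := fun x => (id x, σ ξ x)) (HasFDerivAt.prodMk (hasFDerivAt_id q) hσd)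
    have hconst : (fun p : E => f (p, σ ξ p)) = fun _ => μ ξ := by
      funext p; simp [hf, hconn]
    have h0 : HasFDerivAt (fun p : E => f (p, σ ξ p)) (0 : E →L[ℝ] ℝ) q := by
      rw [hconst]; exact hasFDerivAt_const (μ ξ) q
    have huniq := hcomp.unique h0
    have := congrArg (fun (L : E →L[ℝ] ℝ) => L v) huniq
    simpa [hD] using this
  -- derivative in the first slot
  have hslot1 : fderiv ℝ (fun p : E => μ (ω p w)) q v = F (v, 0) := by
    have h1 : HasFDerivAt (fun p : E => f (p, w))
        (F.comp ((ContinuousLinearMap.id ℝ E).prod 0)) q :=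
      hfd.comp q (f := fun x => (id x, w)) (HasFDerivAt.prodMk (hasFDerivAt_id q) (hasFDerivAt_const w q))
    have : fderiv ℝ (fun p : E => f (p, w)) q v = F (v, 0) := by
      rw [h1.fderiv]; rfl
    simpa [hf] using this
  -- derivative in the second slot recovers the (pointwise linear) map μ ∘ ω q
  have hslot2 : μ (ω q D) = F (0, D) := by
    have hc : HasDerivAt (fun t : ℝ => w + t • D) D 0 := by
      simpa using ((hasDerivAt_id (0 : ℝ)).smul_const D).const_add w
    have hcurve : HasDerivAt (fun t : ℝ => (q, w + t • D)) ((0 : E), D) 0 :=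
      HasDerivAt.prodMk (hasDerivAt_const (0 : ℝ) q) hc
    have hfd' : HasFDerivAt f F (q, w + (0 : ℝ) • D) := by simpa using hfd
    have h2 : HasDerivAt (fun t : ℝ => f (q, w + t • D)) (F ((0 : E), D)) 0 :=
      hfd'.comp_hasDerivAt 0 (f := fun t : ℝ => (q, w + t • D)) hcurve
    have h3 : HasDerivAt (fun t : ℝ => f (q, w + t • D)) (μ (ω q D)) 0 := by
      have heq : (fun t : ℝ => f (q, w + t • D))
          = fun t : ℝ => μ (ω q w) + t * μ (ω q D) := by
        funext t
        simp [hf, map_add, map_smul, smul_eq_mul]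
      rw [heq]
      simpa using (((hasDerivAt_id (0 : ℝ)).mul_const (μ (ω q D))).const_add (μ (ω q w)))
    exact (h3.unique h2)
  -- assemble
  have h1 := hequiv ξ q v
  rw [hμ (ω q v), neg_zero] at h1
  have hsplit : F (v, D) = F (v, 0) + F (0, D) := by
    rw [← map_add]; norm_num
  rw [hslot1]
  rw [← hw] at h1
  linarith [hzero, hsplit, hslot2, h1]
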